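/- Let Ω be a closed 2-form on M, L ⊂ TM ⊕ T*M the associated Dirac structure with sections X + ΩX, and N(X+ξ) = N₀X for a (1,1)-tensor N₀ on TM. Then L is closed under the contracted Courant product ∘_N if and only if Ω N₀ is skew-symmetric and the 2-form Ω N₀ is closed (d(ΩN₀) = 0); in that case (X + ΩX) ∘_N (Y + ΩY) = [X,Y]_{N₀} + Ω[X,Y]_{N₀}. -/

import Mathlib

set_option linter.unusedSectionVars false

open Manifold
local notation "∞" => (⊤ : ℕ∞)

variable {EE : Type*} [NormedAddCommGroup EE] [NormedSpace ℝ EE] [FiniteDimensional ℝ EE]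
  {M : Type*} [TopologicalSpace M] [ChartedSpace EE M]
  {I : ModelWithCorners ℝ EE EE} [IsManifold I ∞ M]

local notation "𝓕" => C^∞⟮I, M; ℝ⟯
local notation "𝓥" => Derivation ℝ C^∞⟮I, M; ℝ⟯ C^∞⟮I, M; ℝ⟯
local notation "Ω¹" =>
  (Derivation ℝ C^∞⟮I, M; ℝ⟯ C^∞⟮I, M; ℝ⟯ →ₗ[C^∞⟮I, M; ℝ⟯] C^∞⟮I, M; ℝ⟯)

theorem bracket_smul (X Y : 𝓥) (f : 𝓕) :
    ⁅X, f • Y⁆ = f • ⁅X, Y⁆ + X f • Y := by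
  ext g
  simp only [Derivation.commutator_apply, Derivation.smul_apply, Derivation.add_apply,
    smul_eq_mul, Derivation.leibniz]
  ring

theorem bracket_add_right (X Y Z : 𝓥) : ⁅X, Y + Z⁆ = ⁅X, Y⁆ + ⁅X, Z⁆ := by
  ext g
  simp only [Derivation.commutator_apply, Derivation.add_apply, map_add]
  ring

/-- The Lie derivative of a 1-form along a vector field. -/
noncomputable def lieD (X : 𝓥) (η : Ω¹) : Ω¹ where
  toFun Y := X (η Y) - η ⁅X, Y⁆
  map_add' Y Z := by simp only [map_add, bracket_add_right, Derivation.add_apply]; abel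
  map_smul' f Y := by
    simp only [map_smul, smul_eq_mul, Derivation.leibniz, bracket_smul, map_add,
      RingHom.id_apply]
    ring

/-- The contraction `i_Y dξ` of the de Rham differential of a 1-form `ξ`. -/
noncomputable def iotaD (Y : 𝓥) (ξ : Ω¹) : Ω¹ where
  toFun Z := Y (ξ Z) - Z (ξ Y) - ξ ⁅Y, Z⁆
  map_add' Z W := by simp only [map_add, bracket_add_right, Derivation.add_apply]; abel
  map_smul' f Z := by
    simp only [map_smul, smul_eq_mul, Derivation.leibniz, bracket_smul, map_add,
      Derivation.smul_apply, RingHom.id_apply]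
    ring

/-- The (Leibniz-version) Courant bracket on `TM ⊕ T*M`. -/
noncomputable def courant (u v : 𝓥 × Ω¹) : 𝓥 × Ω¹ :=
  (⁅u.1, v.1⁆, lieD u.1 v.2 - iotaD v.1 u.2)


/-- The endomorphism `N(X+ξ) = N₀X` of `TM ⊕ T*M`. -/
noncomputable def liftTop (N₀ : Derivation ℝ C^∞⟮I, M; ℝ⟯ C^∞⟮I, M; ℝ⟯
      →ₗ[C^∞⟮I, M; ℝ⟯] Derivation ℝ C^∞⟮I, M; ℝ⟯ C^∞⟮I, M; ℝ⟯)
    (u : 𝓥 × Ω¹) : 𝓥 × Ω¹ :=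
  (N₀ u.1, 0)

/-- The contracted product `u ∘_N v = Nu∘v + u∘Nv − N(u∘v)`. -/
noncomputable def contractedCourant (N : 𝓥 × Ω¹ → 𝓥 × Ω¹) (u v : 𝓥 × Ω¹) : 𝓥 × Ω¹ :=
  courant (N u) v + courant u (N v) - N (courant u v)

/-- The deformed bracket `[X,Y]_{N₀} = [N₀X,Y] + [X,N₀Y] − N₀[X,Y]`. -/
noncomputable def nbracket (N₀ : Derivation ℝ C^∞⟮I, M; ℝ⟯ C^∞⟮I, M; ℝ⟯
      →ₗ[C^∞⟮I, M; ℝ⟯] Derivation ℝ C^∞⟮I, M; ℝ⟯ C^∞⟮I, M; ℝ⟯)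
    (X Y : 𝓥) : 𝓥 :=
  ⁅N₀ X, Y⁆ + ⁅X, N₀ Y⁆ - N₀ ⁅X, Y⁆


theorem lieD_apply' (X : 𝓥) (η : Ω¹) (Y : 𝓥) : lieD X η Y = X (η Y) - η ⁅X, Y⁆ := rfl

theorem iotaD_apply' (Y : 𝓥) (ξ : Ω¹) (Z : 𝓥) :
    iotaD Y ξ Z = Y (ξ Z) - Z (ξ Y) - ξ ⁅Y, Z⁆ := rfl

theorem lie_self' (X : 𝓥) : ⁅X, X⁆ = 0 := lie_self X

theorem bracket_smul_left' (X Y : 𝓥) (f : 𝓕) :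
    ⁅f • X, Y⁆ = f • ⁅X, Y⁆ - Y f • X := by
  ext g
  simp only [Derivation.commutator_apply, Derivation.smul_apply, Derivation.sub_apply,
    smul_eq_mul, Derivation.leibniz]
  ring

theorem lieD_zero' (X : 𝓥) : lieD X (0 : Ω¹) = 0 := by
  refine LinearMap.ext fun Z => ?_
  simp [lieD_apply']

theorem iotaD_zero' (Y : 𝓥) : iotaD Y (0 : Ω¹) = 0 := by
  refine LinearMap.ext fun Z => ?_
  simp [iotaD_apply']

theorem contracted_eval
    (Ω : Derivation ℝ C^∞⟮I, M; ℝ⟯ C^∞⟮I, M; ℝ⟯ →ₗ[C^∞⟮I, M; ℝ⟯]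
      (Derivation ℝ C^∞⟮I, M; ℝ⟯ C^∞⟮I, M; ℝ⟯ →ₗ[C^∞⟮I, M; ℝ⟯] C^∞⟮I, M; ℝ⟯))
    (N₀ : Derivation ℝ C^∞⟮I, M; ℝ⟯ C^∞⟮I, M; ℝ⟯
      →ₗ[C^∞⟮I, M; ℝ⟯] Derivation ℝ C^∞⟮I, M; ℝ⟯ C^∞⟮I, M; ℝ⟯)
    (X Y : 𝓥) :
    contractedCourant (liftTop N₀) (X, Ω X) (Y, Ω Y)
      = (nbracket N₀ X Y, lieD (N₀ X) (Ω Y) - iotaD (N₀ Y) (Ω X)) := by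
  unfold contractedCourant courant liftTop nbracket
  refine Prod.ext ?_ ?_
  · rfl
  · simp only [Prod.snd_add, Prod.snd_sub]
    simp only [lieD_zero', iotaD_zero']
    abel

theorem keyE
    (Ω : Derivation ℝ C^∞⟮I, M; ℝ⟯ C^∞⟮I, M; ℝ⟯ →ₗ[C^∞⟮I, M; ℝ⟯]
      (Derivation ℝ C^∞⟮I, M; ℝ⟯ C^∞⟮I, M; ℝ⟯ →ₗ[C^∞⟮I, M; ℝ⟯] C^∞⟮I, M; ℝ⟯))
    (hΩclosed : ∀ X Y : 𝓥, lieD X (Ω Y) - iotaD Y (Ω X) - Ω ⁅X, Y⁆ = 0)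
    (N₀ : Derivation ℝ C^∞⟮I, M; ℝ⟯ C^∞⟮I, M; ℝ⟯
      →ₗ[C^∞⟮I, M; ℝ⟯] Derivation ℝ C^∞⟮I, M; ℝ⟯ C^∞⟮I, M; ℝ⟯)
    (X Y : 𝓥) :
    lieD (N₀ X) (Ω Y) - iotaD (N₀ Y) (Ω X)
      = Ω (nbracket N₀ X Y)
        - (lieD X (Ω (N₀ Y)) - iotaD Y (Ω (N₀ X)) - Ω (N₀ ⁅X, Y⁆)) := by
  have h1 := LinearMap.congr_fun (hΩclosed (N₀ X) Y)
  have h2 := LinearMap.congr_fun (hΩclosed X (N₀ Y))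
  refine LinearMap.ext fun Z => ?_
  have h1Z := h1 Z
  have h2Z := h2 Z
  simp only [LinearMap.sub_apply, LinearMap.add_apply, LinearMap.zero_apply,
    lieD_apply', iotaD_apply', nbracket, map_add, map_sub] at h1Z h2Z ⊢
  linear_combination h1Z + h2Z

theorem anomaly
    (Ω : Derivation ℝ C^∞⟮I, M; ℝ⟯ C^∞⟮I, M; ℝ⟯ →ₗ[C^∞⟮I, M; ℝ⟯]
      (Derivation ℝ C^∞⟮I, M; ℝ⟯ C^∞⟮I, M; ℝ⟯ →ₗ[C^∞⟮I, M; ℝ⟯] C^∞⟮I, M; ℝ⟯))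
    (N₀ : Derivation ℝ C^∞⟮I, M; ℝ⟯ C^∞⟮I, M; ℝ⟯
      →ₗ[C^∞⟮I, M; ℝ⟯] Derivation ℝ C^∞⟮I, M; ℝ⟯ C^∞⟮I, M; ℝ⟯)
    (hD : ∀ X Y : 𝓥,
        lieD X (Ω (N₀ Y)) - iotaD Y (Ω (N₀ X)) - Ω (N₀ ⁅X, Y⁆) = 0)
    (X Y : 𝓥) (f : 𝓕) :
    X f * (Ω (N₀ X) Y + Ω (N₀ Y) X) = 0 := by
  have h1 := LinearMap.congr_fun (hD (f • X) Y) X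
  have h2 := LinearMap.congr_fun (hD X Y) X
  simp only [LinearMap.sub_apply, LinearMap.add_apply, LinearMap.zero_apply,
    lieD_apply', iotaD_apply', bracket_smul_left', lie_self, smul_zero, zero_sub,
    map_smul, map_sub, map_neg, LinearMap.smul_apply, Derivation.smul_apply,
    smul_eq_mul, Derivation.leibniz, map_zero] at h1 h2
  linear_combination h1 - f * h2

set_option maxHeartbeats 1000000 in
/-- for the Dirac structure `L = {X + ΩX}` of a closed 2-form `Ω`
and `N(X+ξ) = N₀X`, the subbundle `L` is closed under `∘_N` iff `ΩN₀` is
skew-symmetric and `d(ΩN₀) = 0`; in that case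
`(X + ΩX) ∘_N (Y + ΩY) = [X,Y]_{N₀} + Ω[X,Y]_{N₀}`. -/
theorem graph_closed_under_contracted_iff
    (Ω : Derivation ℝ C^∞⟮I, M; ℝ⟯ C^∞⟮I, M; ℝ⟯ →ₗ[C^∞⟮I, M; ℝ⟯]
      (Derivation ℝ C^∞⟮I, M; ℝ⟯ C^∞⟮I, M; ℝ⟯ →ₗ[C^∞⟮I, M; ℝ⟯] C^∞⟮I, M; ℝ⟯))
    (hΩskew : ∀ X Y : 𝓥, Ω X Y = - Ω Y X)
    (hΩclosed : ∀ X Y : 𝓥, lieD X (Ω Y) - iotaD Y (Ω X) - Ω ⁅X, Y⁆ = 0)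
    (N₀ : Derivation ℝ C^∞⟮I, M; ℝ⟯ C^∞⟮I, M; ℝ⟯
      →ₗ[C^∞⟮I, M; ℝ⟯] Derivation ℝ C^∞⟮I, M; ℝ⟯ C^∞⟮I, M; ℝ⟯) :
    ((∀ X Y : 𝓥, ∃ Z : 𝓥,
        contractedCourant (liftTop N₀) (X, Ω X) (Y, Ω Y) = (Z, Ω Z))
      ↔ ((∀ X Y : 𝓥, Ω (N₀ X) Y = - Ω (N₀ Y) X)
          ∧ (∀ X Y : 𝓥,
              lieD X (Ω (N₀ Y)) - iotaD Y (Ω (N₀ X)) - Ω (N₀ ⁅X, Y⁆) = 0)))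
    ∧ (((∀ X Y : 𝓥, Ω (N₀ X) Y = - Ω (N₀ Y) X)
          ∧ (∀ X Y : 𝓥,
              lieD X (Ω (N₀ Y)) - iotaD Y (Ω (N₀ X)) - Ω (N₀ ⁅X, Y⁆) = 0)) →
        ∀ X Y : 𝓥,
          contractedCourant (liftTop N₀) (X, Ω X) (Y, Ω Y)
            = (nbracket N₀ X Y, Ω (nbracket N₀ X Y))) := by
  have hiff : (∀ X Y : 𝓥,
      lieD X (Ω (N₀ Y)) - iotaD Y (Ω (N₀ X)) - Ω (N₀ ⁅X, Y⁆) = 0) →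
      ∀ X Y : 𝓥,
        contractedCourant (liftTop N₀) (X, Ω X) (Y, Ω Y)
          = (nbracket N₀ X Y, Ω (nbracket N₀ X Y)) := by
    intro hD X Y
    rw [contracted_eval Ω N₀ X Y, keyE Ω hΩclosed N₀ X Y, hD X Y, sub_zero]
  constructor
  · constructor
    · intro hcl
      have hD : ∀ X Y : 𝓥,
          lieD X (Ω (N₀ Y)) - iotaD Y (Ω (N₀ X)) - Ω (N₀ ⁅X, Y⁆) = 0 := by
        intro X Y
        obtain ⟨Z, hZ⟩ := hcl X Y
        rw [contracted_eval Ω N₀ X Y] at hZ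
        have hZ1 := congrArg Prod.fst hZ
        have hZ2 := congrArg Prod.snd hZ
        simp only at hZ1 hZ2
        have hk := keyE Ω hΩclosed N₀ X Y
        rw [hZ2, hZ1] at hk
        exact sub_eq_self.mp hk.symm
      refine ⟨?_, hD⟩
      intro X Y
      have hXf : ∀ f : 𝓕, X f * (Ω (N₀ X) Y + Ω (N₀ Y) X) = 0 :=
        fun f => anomaly Ω N₀ hD X Y f
      set s : 𝓕 := Ω (N₀ X) Y + Ω (N₀ Y) X with hs
      have hsX : s • X = 0 := by
        refine Derivation.ext fun g => ?_
        rw [Derivation.smul_apply, Derivation.zero_apply, smul_eq_mul, mul_comm]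
        exact hXf g
      have c1 : s * Ω (N₀ X) Y = 0 := by
        have h := congrArg (fun W : 𝓥 => Ω (N₀ W) Y) hsX
        simpa [map_smul, map_zero, LinearMap.smul_apply, LinearMap.zero_apply,
          smul_eq_mul] using h
      have c2 : s * Ω (N₀ Y) X = 0 := by
        have h := congrArg (fun W : 𝓥 => Ω (N₀ Y) W) hsX
        simpa [map_smul, map_zero, smul_eq_mul] using h
      have hss : s * s = 0 := by
        calc s * s = s * Ω (N₀ X) Y + s * Ω (N₀ Y) X := by rw [hs]; ring
        _ = 0 := by rw [c1, c2, add_zero]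
      have hs0 : s = 0 := by
        ext p
        have hp := congrArg (fun g : 𝓕 => g p) hss
        simp only [ContMDiffMap.coe_mul, Pi.mul_apply, ContMDiffMap.coe_zero,
          Pi.zero_apply] at hp
        simpa using mul_self_eq_zero.mp hp
      have hadd : Ω (N₀ X) Y + Ω (N₀ Y) X = 0 := by rw [← hs]; exact hs0
      exact eq_neg_of_add_eq_zero_left hadd
    · rintro ⟨hsk, hD⟩ X Y
      exact ⟨nbracket N₀ X Y, hiff hD X Y⟩
  · rintro ⟨hsk, hD⟩ X Y
    exact hiff hD X Y
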